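/- Let H be a finite tree with at least one edge that contains no induced subgraph isomorphic to J_3, and let (U, U') be its bipartition with |U| = h and |U'| = h'. Then there exist bijections π : U → {1,…,h} and π' : U' → {1,…,h'} and monotonically non-decreasing functions m, M : {1,…,h} → {1,…,h'} and m', M' : {1,…,h'} → {1,…,h} such that: for every u ∈ U with π(u) = i, the set {π'(u') : u' a neighbour of u} equals {ℓ : m(i) ≤ ℓ ≤ M(i)}; and for every u' ∈ U' with π'(u') = i, the set {π(u) : u a neighbour of u'} equals {ℓ : m'(i) ≤ ℓ ≤ M'(i)}. -/

import Mathlib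

/-!
STATEMENT 3: A finite tree `H` with at least one edge and no induced `J₃` admits a
"convex ordering" of its bipartition `(U, Uᶜ)`: bijections `π : U ≃ Fin h`,
`π' : Uᶜ ≃ Fin h'` together with monotone functions `m, M : Fin h → Fin h'` and
`m', M' : Fin h' → Fin h` such that the neighbourhood of each vertex is exactly an
interval in the ordering of the other side.
-/

/-- The vertex set of the tree `J_q`: a centre `w`, leaves `c i`, and
middle vertices `c' i` for `i ∈ [q]`. -/
inductive JVert (q : ℕ) : Type
  | w : JVert q
  | c (i : Fin q) : JVert q
  | c' (i : Fin q) : JVert q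

/-- The tree `J_q`, with edges `(c i, c' i)` and `(c' i, w)` for `i ∈ [q]`. -/
def Jgraph (q : ℕ) : SimpleGraph (JVert q) :=
  SimpleGraph.fromRel (fun a b =>
    (∃ i, a = JVert.c i ∧ b = JVert.c' i) ∨ (∃ i, a = JVert.c' i ∧ b = JVert.w))

section aux
open SimpleGraph Walk
set_option linter.unreachableTactic false
set_option linter.unusedTactic false
variable {α : Type*} {H : SimpleGraph α}

lemma J3_of (v0 v1 v2 v3 v4 u w : α)
    (h01 : H.Adj v0 v1) (h12 : H.Adj v1 v2) (h23 : H.Adj v2 v3) (h34 : H.Adj v3 v4)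
    (h2u : H.Adj v2 u) (huw : H.Adj u w)
    (n02 : ¬H.Adj v0 v2) (n03 : ¬H.Adj v0 v3) (n04 : ¬H.Adj v0 v4)
    (n13 : ¬H.Adj v1 v3) (n14 : ¬H.Adj v1 v4) (n24 : ¬H.Adj v2 v4)
    (n0u : ¬H.Adj v0 u) (n1u : ¬H.Adj v1 u) (n3u : ¬H.Adj v3 u) (n4u : ¬H.Adj v4 u)
    (n0w : ¬H.Adj v0 w) (n1w : ¬H.Adj v1 w) (n2w : ¬H.Adj v2 w) (n3w : ¬H.Adj v3 w)
    (n4w : ¬H.Adj v4 w)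
    (d02 : v0 ≠ v2) (d03 : v0 ≠ v3) (d04 : v0 ≠ v4) (d13 : v1 ≠ v3) (d14 : v1 ≠ v4)
    (d24 : v2 ≠ v4) (d0u : v0 ≠ u) (d1u : v1 ≠ u) (d3u : v3 ≠ u) (d4u : v4 ≠ u)
    (d0w : v0 ≠ w) (d1w : v1 ≠ w) (d2w : v2 ≠ w) (d3w : v3 ≠ w) (d4w : v4 ≠ w) :
    ∃ s : Set α, Nonempty (H.induce s ≃g Jgraph 3) := by
  have d01 := h01.ne
  have d12 := h12.ne
  have d23 := h23.ne
  have d34 := h34.ne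
  have d2u := h2u.ne
  have duw := huw.ne
  set f : JVert 3 → α := fun v => match v with
    | .w => v2
    | .c' i => ![v1, v3, u] i
    | .c i => ![v0, v4, w] i with hfdef
  have hf : Function.Injective f := by
    intro a b hab
    rcases a with _|i|i <;> rcases b with _|j|j <;>
      (try fin_cases i) <;> (try fin_cases j) <;> simp_all [f] <;>
      first
        | rfl
        | (exact absurd hab (by tauto))
        | (exact absurd hab.symm (by tauto))
  refine ⟨Set.range f, ⟨(SimpleGraph.Iso.symm ⟨Equiv.ofInjective f hf, ?_⟩ : _)⟩⟩
  intro a b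
  have h10 := h01.symm; have h21 := h12.symm; have h32 := h23.symm
  have h43 := h34.symm; have hu2 := h2u.symm; have hwu := huw.symm
  have n20 : ¬H.Adj v2 v0 := fun h => n02 h.symm
  have n30 : ¬H.Adj v3 v0 := fun h => n03 h.symm
  have n40 : ¬H.Adj v4 v0 := fun h => n04 h.symm
  have n31 : ¬H.Adj v3 v1 := fun h => n13 h.symm
  have n41 : ¬H.Adj v4 v1 := fun h => n14 h.symm
  have n42 : ¬H.Adj v4 v2 := fun h => n24 h.symm
  have nu0 : ¬H.Adj u v0 := fun h => n0u h.symm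
  have nu1 : ¬H.Adj u v1 := fun h => n1u h.symm
  have nu3 : ¬H.Adj u v3 := fun h => n3u h.symm
  have nu4 : ¬H.Adj u v4 := fun h => n4u h.symm
  have nw0 : ¬H.Adj w v0 := fun h => n0w h.symm
  have nw1 : ¬H.Adj w v1 := fun h => n1w h.symm
  have nw2 : ¬H.Adj w v2 := fun h => n2w h.symm
  have nw3 : ¬H.Adj w v3 := fun h => n3w h.symm
  have nw4 : ¬H.Adj w v4 := fun h => n4w h.symm
  show (H.induce _).Adj (Equiv.ofInjective f hf a) (Equiv.ofInjective f hf b) ↔ _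
  have key : ∀ z z' : JVert 3,
      (H.induce (Set.range f)).Adj (Equiv.ofInjective f hf z) (Equiv.ofInjective f hf z')
        ↔ H.Adj (f z) (f z') := by
    intro z z'; simp
  rw [key]
  rcases a with _|i|i <;> rcases b with _|j|j <;>
    (try fin_cases i) <;> (try fin_cases j) <;>
    simp [f, Jgraph, SimpleGraph.fromRel_adj] <;>
    first
      | assumption
      | exact H.irrefl
      | (intro hh; first | exact n02 hh | tauto)

lemma getVert_inj {u v : α} {p : H.Walk u v} (hp : p.IsPath) :
    ∀ i j, i ≤ p.length → j ≤ p.length → p.getVert i = p.getVert j → i = j := by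
  induction p with
  | nil => intro i j hi hj _; simp at hi hj; omega
  | @cons a b c hadj q ih =>
    rw [Walk.cons_isPath_iff] at hp
    intro i j hi hj hij
    match i, j with
    | 0, 0 => rfl
    | 0, j + 1 =>
      exfalso
      apply hp.2
      rw [Walk.getVert_zero] at hij
      simp only [Walk.getVert_cons_succ] at hij
      exact Walk.mem_support_iff_exists_getVert.mpr ⟨j, hij.symm, by simpa using hj⟩
    | i + 1, 0 =>
      exfalso
      apply hp.2
      rw [Walk.getVert_zero] at hij
      simp only [Walk.getVert_cons_succ] at hij
      exact Walk.mem_support_iff_exists_getVert.mpr ⟨i, hij, by simpa using hi⟩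
    | i + 1, j + 1 =>
      simp only [Walk.getVert_cons_succ] at hij
      have := ih hp.1 i j (by simpa using hi) (by simpa using hj) hij
      omega

lemma getVert_mem_support {u v : α} (p : H.Walk u v) {i : ℕ} (hi : i ≤ p.length) :
    p.getVert i ∈ p.support :=
  Walk.mem_support_iff_exists_getVert.mpr ⟨i, rfl, hi⟩

lemma seg {u v : α} (P : H.Walk u v) (hP : P.IsPath) :
    ∀ j i, i ≤ j → j ≤ P.length →
    ∃ W : H.Walk (P.getVert i) (P.getVert j), W.IsPath ∧ W.length = j - i ∧
      ∀ a ∈ W.support, ∃ t, i ≤ t ∧ t ≤ j ∧ P.getVert t = a := by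
  intro j
  induction j with
  | zero =>
    intro i hi _
    obtain rfl : i = 0 := by omega
    exact ⟨Walk.nil, by simp, by simp, by simp⟩
  | succ j ih =>
    intro i hi hj
    rcases Nat.eq_or_lt_of_le hi with heq | hlt
    · obtain rfl : i = j + 1 := heq
      refine ⟨Walk.nil, by simp, by simp, fun a ha => ⟨j + 1, le_refl _, le_refl _, ?_⟩⟩
      simp at ha; exact ha.symm
    · obtain ⟨W, hW, hlen, hsup⟩ := ih i (by omega) (by omega)
      have hadj : H.Adj (P.getVert j) (P.getVert (j + 1)) := P.adj_getVert_succ (by omega)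
      have hnotmem : P.getVert (j + 1) ∉ W.support := by
        intro hmem
        obtain ⟨t, ht1, ht2, ht3⟩ := hsup _ hmem
        have := getVert_inj hP t (j+1) (by omega) hj ht3
        omega
      refine ⟨W.concat hadj, ?_, ?_, ?_⟩
      · rw [Walk.isPath_def, Walk.support_concat]
        exact List.Nodup.append hW.support_nodup (by simp)
          (by intro a ha hb; simp at hb; subst hb; exact hnotmem ha)
      · rw [Walk.length_concat]; omega
      · intro a ha
        rw [Walk.support_concat, List.mem_append] at ha
        rcases ha with ha | ha
        · obtain ⟨t, ht1, ht2, ht3⟩ := hsup a ha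
          exact ⟨t, ht1, by omega, ht3⟩
        · simp at ha; exact ⟨j + 1, by omega, le_refl _, ha.symm⟩

lemma two_paths (hT : H.IsTree) {a b : α} (W1 W2 : H.Walk a b)
    (h1 : W1.IsPath) (h2 : W2.IsPath) (hne : W1 ≠ W2) : False := by
  obtain ⟨W0, -, hu⟩ := hT.existsUnique_path a b
  exact hne ((hu W1 h1).trans (hu W2 h2).symm)

lemma no_chord (hT : H.IsTree) {x y : α} {P : H.Walk x y} (hP : P.IsPath)
    {i j : ℕ} (hij : i + 1 < j) (hj : j ≤ P.length)
    (hadj : H.Adj (P.getVert i) (P.getVert j)) : False := by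
  obtain ⟨W, hW, hlen, _⟩ := seg P hP j i (by omega) hj
  apply two_paths hT (Walk.cons hadj Walk.nil) W ?_ hW
  · intro hEq
    have : (Walk.cons hadj Walk.nil).length = W.length := by rw [hEq]
    simp [hlen] at this; omega
  · rw [Walk.isPath_def]
    simp [hadj.ne]

lemma adj_spine (hT : H.IsTree) {x y : α} {P : H.Walk x y} (hP : P.IsPath)
    {i j : ℕ} (hi : i ≤ P.length) (hj : j ≤ P.length)
    (hadj : H.Adj (P.getVert i) (P.getVert j)) : j = i + 1 ∨ i = j + 1 := by
  rcases lt_trichotomy i j with h | h | h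
  · left; by_contra hne; exact no_chord hT hP (by omega) hj hadj
  · exact absurd (h ▸ hadj) H.irrefl
  · right; by_contra hne; exact no_chord hT hP (by omega) hi hadj.symm

section Struct

variable {x y : α} {P : H.Walk x y}

/-- An off-path vertex has at most one neighbour on the path. -/
lemma L0 (hT : H.IsTree) (hP : P.IsPath) {u : α} (hu : u ∉ P.support)
    {i j : ℕ} (hi : i ≤ P.length) (hj : j ≤ P.length)
    (hui : H.Adj u (P.getVert i)) (huj : H.Adj u (P.getVert j)) : i = j := by
  by_contra hne
  -- WLOG i < j
  wlog hlt : i < j generalizing i j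
  · exact this hj hi huj hui (Ne.symm hne) (by omega)
  obtain ⟨W, hW, hlen, hsup⟩ := seg P hP j i (by omega) hj
  have hne' : P.getVert i ≠ P.getVert j := fun h => hne (getVert_inj hP i j hi hj h)
  have hW1 : (Walk.cons hui.symm (Walk.cons huj Walk.nil)).IsPath := by
    rw [Walk.isPath_def]
    have h1 : P.getVert i ≠ u := fun h => hu (h ▸ getVert_mem_support P hi)
    have h2 : P.getVert j ≠ u := fun h => hu (h ▸ getVert_mem_support P hj)
    simp [h1, h2, h1.symm, h2.symm, hne']
  apply two_paths hT _ W hW1 hW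
  intro hEq
  have : u ∈ W.support := by
    rw [← hEq]; simp
  obtain ⟨t, _, ht2, ht3⟩ := hsup u this
  exact hu (ht3 ▸ getVert_mem_support P (by omega))

/-- No off-path vertex is adjacent to the start of a maximal path. -/
lemma ext0 (hP : P.IsPath)
    (hmax : ∀ {a b : α} (Q : H.Walk a b), Q.IsPath → Q.length ≤ P.length)
    {u : α} (hu : u ∉ P.support) (hadj : H.Adj u (P.getVert 0)) : False := by
  rw [Walk.getVert_zero] at hadj
  have hW : (Walk.cons hadj P).IsPath := hP.cons hu
  have := hmax _ hW
  simp at this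

/-- No off-path vertex is adjacent to the end of a maximal path. -/
lemma extEnd (hP : P.IsPath)
    (hmax : ∀ {a b : α} (Q : H.Walk a b), Q.IsPath → Q.length ≤ P.length)
    {u : α} (hu : u ∉ P.support) (hadj : H.Adj u (P.getVert P.length)) : False := by
  rw [Walk.getVert_length] at hadj
  have hW : (Walk.cons hadj P.reverse).IsPath := hP.reverse.cons (by simpa using hu)
  have := hmax _ hW
  simp at this

/-- Two adjacent off-path vertices, one of them adjacent to `P.getVert 1`, are impossible. -/
lemma ext1 (hP : P.IsPath)
    (hmax : ∀ {a b : α} (Q : H.Walk a b), Q.IsPath → Q.length ≤ P.length)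
    {u w : α} (hu : u ∉ P.support) (hw : w ∉ P.support) (hk : 1 ≤ P.length)
    (hadj : H.Adj u (P.getVert 1)) (huw : H.Adj u w) : False := by
  obtain ⟨W, hW, hlen, hsup⟩ := seg P hP P.length 1 hk (le_refl _)
  have huW : u ∉ W.support := by
    intro hmem
    obtain ⟨t, _, ht2, ht3⟩ := hsup u hmem
    exact hu (ht3 ▸ getVert_mem_support P (by omega))
  have h1 : (Walk.cons hadj W).IsPath := hW.cons huW
  have h2 : (Walk.cons huw.symm (Walk.cons hadj W)).IsPath := by
    apply h1.cons
    simp only [Walk.support_cons, List.mem_cons]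
    rintro (rfl | hmem)
    · exact huw.ne rfl
    · obtain ⟨t, _, ht2, ht3⟩ := hsup w hmem
      exact hw (ht3 ▸ getVert_mem_support P (by omega))
  have := hmax _ h2
  simp [hlen] at this
  omega

/-- symmetric version at the top end -/
lemma extK1 (hP : P.IsPath)
    (hmax : ∀ {a b : α} (Q : H.Walk a b), Q.IsPath → Q.length ≤ P.length)
    {u w : α} (hu : u ∉ P.support) (hw : w ∉ P.support) (hk : 1 ≤ P.length)
    (hadj : H.Adj u (P.getVert (P.length - 1))) (huw : H.Adj u w) : False := by
  have h1 : P.reverse.getVert 1 = P.getVert (P.length - 1) := by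
    rw [Walk.getVert_reverse]
  apply ext1 (P := P.reverse) hP.reverse
    (fun Q hQ => by rw [Walk.length_reverse]; exact hmax Q hQ)
    (by simpa using hu) (by simpa using hw)
    (by rwa [Walk.length_reverse]) (by rwa [h1]) huw

end Struct

section Struct2
variable {x y : α} {P : H.Walk x y}

lemma Lstar (hT : H.IsTree) (hP : P.IsPath)
    (hmax : ∀ {a b : α} (Q : H.Walk a b), Q.IsPath → Q.length ≤ P.length)
    (hJ3 : ¬ ∃ s : Set α, Nonempty (H.induce s ≃g Jgraph 3))
    {u w : α} (hu : u ∉ P.support) (hw : w ∉ P.support) {j : ℕ} (hj : j ≤ P.length)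
    (huj : H.Adj u (P.getVert j)) (huw : H.Adj u w) : False := by
  have hpuj : P.getVert j ∈ P.support := getVert_mem_support P hj
  -- w is not adjacent to any path vertex
  have wnoP : ∀ i, i ≤ P.length → ¬ H.Adj w (P.getVert i) := by
    intro i hi hwi
    have hpi : P.getVert i ∈ P.support := getVert_mem_support P hi
    by_cases hij : i = j
    · subst hij
      have hW1 : (Walk.cons huw Walk.nil).IsPath := by
        rw [Walk.isPath_def]; simp [huw.ne]
      have hW2 : (Walk.cons huj (Walk.cons hwi.symm Walk.nil)).IsPath := by
        rw [Walk.isPath_def]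
        have h1 : u ≠ P.getVert i := fun h => hu (h ▸ hpi)
        have h2 : w ≠ P.getVert i := fun h => hw (h ▸ hpi)
        simp [h1, h2.symm, huw.ne]
      apply two_paths hT _ _ hW1 hW2
      intro hEq
      have := congrArg Walk.length hEq
      simp at this
    · have hne' : P.getVert j ≠ P.getVert i :=
        fun h => hij (getVert_inj hP i j hi hj h.symm)
      have hW1 : (Walk.cons huj.symm (Walk.cons huw (Walk.cons hwi Walk.nil))).IsPath := by
        rw [Walk.isPath_def]
        have h1 : u ≠ P.getVert i := fun h => hu (h ▸ hpi)
        have h2 : w ≠ P.getVert i := fun h => hw (h ▸ hpi)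
        have h3 : P.getVert j ≠ u := fun h => hu (h.symm ▸ hpuj)
        have h4 : P.getVert j ≠ w := fun h => hw (h.symm ▸ hpuj)
        simp [h1, h2, h3, h4, hne', huw.ne]
      have main : ∀ (W2 : H.Walk (P.getVert j) (P.getVert i)), W2.IsPath →
          u ∉ W2.support → False := by
        intro W2 hW2 huW2
        apply two_paths hT _ W2 hW1 hW2
        intro hEq
        apply huW2; rw [← hEq]; simp
      rcases lt_or_gt_of_ne (Ne.symm hij) with hlt | hlt
      · obtain ⟨W, hWp, _, hsup⟩ := seg P hP i j (by omega) hi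
        apply main W hWp
        intro hmem
        obtain ⟨t, _, ht2, ht3⟩ := hsup u hmem
        exact hu (ht3 ▸ getVert_mem_support P (by omega))
      · obtain ⟨W, hWp, _, hsup⟩ := seg P hP j i (by omega) hj
        apply main W.reverse hWp.reverse
        intro hmem
        rw [Walk.support_reverse, List.mem_reverse] at hmem
        obtain ⟨t, _, ht2, ht3⟩ := hsup u hmem
        exact hu (ht3 ▸ getVert_mem_support P (by omega))
  by_cases hj0 : j = 0
  · subst hj0; exact ext0 hP hmax hu huj
  by_cases hjk : j = P.length
  · subst hjk; exact extEnd hP hmax hu huj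
  by_cases hj1 : j = 1
  · subst hj1; exact ext1 hP hmax hu hw (by omega) huj huw
  by_cases hjk1 : j = P.length - 1
  · subst hjk1; exact extK1 hP hmax hu hw (by omega) huj huw
  -- middle case: build J₃
  have hj2 : 2 ≤ j ∧ j + 2 ≤ P.length := by omega
  have nfar : ∀ {i i' : ℕ}, i' ≤ P.length → i + 2 ≤ i' → ¬H.Adj (P.getVert i) (P.getVert i') :=
    fun hi' hlt hadj => no_chord hT hP (by omega) hi' hadj
  have adjSucc : ∀ {i i' : ℕ}, i' ≤ P.length → i + 1 = i' → H.Adj (P.getVert i) (P.getVert i') := by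
    rintro i i' hi' rfl
    exact P.adj_getVert_succ (by omega)
  have nu : ∀ {i : ℕ}, i ≤ P.length → i ≠ j → ¬H.Adj (P.getVert i) u := by
    intro i hi hij h
    exact hij (L0 hT hP hu hi hj h.symm huj)
  have dP : ∀ {i i' : ℕ}, i ≤ P.length → i' ≤ P.length → i ≠ i' →
      P.getVert i ≠ P.getVert i' := by
    intro i i' hi hi' hne h
    exact hne (getVert_inj hP i i' hi hi' h)
  have dunotP : ∀ {i : ℕ}, i ≤ P.length → P.getVert i ≠ u :=
    fun hi h => hu (h ▸ getVert_mem_support P hi)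
  have dwnotP : ∀ {i : ℕ}, i ≤ P.length → P.getVert i ≠ w :=
    fun hi h => hw (h ▸ getVert_mem_support P hi)
  apply hJ3
  exact J3_of (P.getVert (j-2)) (P.getVert (j-1)) (P.getVert j) (P.getVert (j+1))
    (P.getVert (j+2)) u w
    (adjSucc (by omega) (by omega)) (adjSucc (by omega) (by omega))
    (adjSucc (by omega) (by omega)) (adjSucc (by omega) (by omega))
    huj.symm huw
    (nfar (by omega) (by omega)) (nfar (by omega) (by omega)) (nfar (by omega) (by omega))
    (nfar (by omega) (by omega)) (nfar (by omega) (by omega)) (nfar (by omega) (by omega))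
    (nu (by omega) (by omega)) (nu (by omega) (by omega)) (nu (by omega) (by omega))
    (nu (by omega) (by omega))
    (fun h => wnoP _ (by omega) h.symm) (fun h => wnoP _ (by omega) h.symm)
    (fun h => wnoP _ (by omega) h.symm) (fun h => wnoP _ (by omega) h.symm)
    (fun h => wnoP _ (by omega) h.symm)
    (dP (by omega) (by omega) (by omega)) (dP (by omega) (by omega) (by omega))
    (dP (by omega) (by omega) (by omega)) (dP (by omega) (by omega) (by omega))
    (dP (by omega) (by omega) (by omega)) (dP (by omega) (by omega) (by omega))
    (dunotP (by omega)) (dunotP (by omega)) (dunotP (by omega)) (dunotP (by omega))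
    (dwnotP (by omega)) (dwnotP (by omega)) (dwnotP (by omega)) (dwnotP (by omega))
    (dwnotP (by omega))

/-- classification of off-path vertices: each is a leaf attached to a unique
internal spine vertex. -/
lemma C1 (hT : H.IsTree) (hP : P.IsPath)
    (hmax : ∀ {a b : α} (Q : H.Walk a b), Q.IsPath → Q.length ≤ P.length)
    (hJ3 : ¬ ∃ s : Set α, Nonempty (H.induce s ≃g Jgraph 3))
    {a : α} (ha : a ∉ P.support) :
    ∃ j, 1 ≤ j ∧ j ≤ P.length - 1 ∧ ∀ b, H.Adj a b ↔ b = P.getVert j := by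
  have key : ∀ (c : α) (Q : H.Walk c x), c ∉ P.support →
      ∃ j, 1 ≤ j ∧ j ≤ P.length - 1 ∧ ∀ b, H.Adj c b ↔ b = P.getVert j := by
    intro c Q
    induction Q with
    | nil => exact fun hc => absurd P.start_mem_support hc
    | @cons c b _ hadj q ih =>
      intro hc
      by_cases hb : b ∈ P.support
      · obtain ⟨n, hn, hnle⟩ := Walk.mem_support_iff_exists_getVert.mp hb
        subst hn
        have hn0 : n ≠ 0 := by
          rintro rfl; exact ext0 hP hmax hc hadj
        have hnk : n ≠ P.length := by
          rintro rfl; exact extEnd hP hmax hc hadj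
        refine ⟨n, by omega, by omega, fun d => ⟨fun hd => ?_, fun hd => hd ▸ hadj⟩⟩
        by_cases hdP : d ∈ P.support
        · obtain ⟨m, hm, hmle⟩ := Walk.mem_support_iff_exists_getVert.mp hdP
          subst hm
          rw [L0 hT hP hc hmle hnle hd hadj]
        · exact absurd (Lstar hT hP hmax hJ3 hc hdP hnle hadj hd) (by simp)
      · obtain ⟨j, _, hj2, hnb⟩ := ih hP hmax ha hb
        have : c = P.getVert j := (hnb c).mp hadj.symm
        exact absurd (this ▸ getVert_mem_support P (by omega)) hc
  obtain ⟨Q⟩ : H.Reachable a x := hT.isConnected.preconnected a x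
  exact key a Q ha
end Struct2

section Convex
variable {x y : α} {P : H.Walk x y}

lemma F0 (hP : P.IsPath) (key : α → ℕ)
    (hkey1 : ∀ j ≤ P.length, key (P.getVert j) = j)
    {a : α} (ha : a ∈ P.support) : P.getVert (key a) = a ∧ key a ≤ P.length := by
  obtain ⟨n, hn, hle⟩ := Walk.mem_support_iff_exists_getVert.mp ha
  have : key a = n := by rw [← hn, hkey1 n hle]
  rw [this, hn]
  exact ⟨rfl, hle⟩

lemma F4 (hT : H.IsTree) (hP : P.IsPath) (key : α → ℕ)
    (hkey1 : ∀ j ≤ P.length, key (P.getVert j) = j)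
    (hkey2 : ∀ a ∉ P.support, (1 ≤ key a ∧ key a ≤ P.length - 1) ∧
      ∀ b, H.Adj a b ↔ b = P.getVert (key a))
    {j : ℕ} (hj : j ≤ P.length) {b : α} (hadj : H.Adj (P.getVert j) b) :
    (b ∈ P.support ∧ P.getVert (key b) = b ∧ (key b = j + 1 ∨ key b + 1 = j)) ∨
      (b ∉ P.support ∧ key b = j) := by
  by_cases hb : b ∈ P.support
  · obtain ⟨hpb, hkb⟩ := F0 hP key hkey1 hb
    left
    refine ⟨hb, hpb, ?_⟩
    rcases adj_spine hT hP hj hkb (hpb.symm ▸ hadj) with h | h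
    · left; omega
    · right; omega
  · right
    obtain ⟨⟨hk1, hk2⟩, hiff⟩ := hkey2 b hb
    have : P.getVert j = P.getVert (key b) := (hiff _).mp hadj.symm
    have hkbk : key b ≤ P.length := by omega
    refine ⟨hb, (getVert_inj hP _ _ hkbk hj this.symm)⟩

lemma CONV (hT : H.IsTree) (hP : P.IsPath) (key : α → ℕ)
    (hkey1 : ∀ j ≤ P.length, key (P.getVert j) = j)
    (hkey2 : ∀ a ∉ P.support, (1 ≤ key a ∧ key a ≤ P.length - 1) ∧
      ∀ b, H.Adj a b ↔ b = P.getVert (key a))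
    {u a b c : α} (hua : H.Adj u a) (huc : H.Adj u c)
    (h1 : key a ≤ key b) (h2 : key b ≤ key c) (hne : b ≠ u)
    (hcom : ∀ d, H.Adj u d → H.Adj b d → False) : H.Adj u b := by
  by_cases hu : u ∈ P.support
  · obtain ⟨hpu, hku⟩ := F0 hP key hkey1 hu
    have hua' : H.Adj (P.getVert (key u)) a := hpu.symm ▸ hua
    have huc' : H.Adj (P.getVert (key u)) c := hpu.symm ▸ huc
    have ra := F4 hT hP key hkey1 hkey2 hku hua'
    have rc := F4 hT hP key hkey1 hkey2 hku huc'
    rcases lt_trichotomy (key b) (key u) with hlt | heq | hgt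
    · -- key b = key u - 1 and a = P.getVert (key b)
      have hA : P.getVert (key a) = a ∧ key a + 1 = key u := by
        rcases ra with ⟨_, hpa, hc⟩ | ⟨_, hc⟩
        · exact ⟨hpa, by omega⟩
        · omega
      have hkab : key a = key b := by omega
      by_cases hb : b ∈ P.support
      · obtain ⟨hpb, _⟩ := F0 hP key hkey1 hb
        have : b = a := by rw [← hpb, ← hkab, hA.1]
        exact this ▸ hua
      · obtain ⟨_, hiff⟩ := hkey2 b hb
        have hba : H.Adj b a := by
          rw [hiff a]
          rw [← hA.1, hkab]
        exact absurd (hcom a hua hba) (by simp)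
    · by_cases hb : b ∈ P.support
      · obtain ⟨hpb, _⟩ := F0 hP key hkey1 hb
        exact absurd (by rw [← hpb, heq, hpu]) hne
      · obtain ⟨_, hiff⟩ := hkey2 b hb
        have : H.Adj b u := by
          rw [hiff u, ← hpu, heq]
        exact this.symm
    · have hC : P.getVert (key c) = c ∧ key c = key u + 1 := by
        rcases rc with ⟨_, hpc, hc⟩ | ⟨_, hc⟩
        · exact ⟨hpc, by omega⟩
        · omega
      have hkcb : key c = key b := by omega
      by_cases hb : b ∈ P.support
      · obtain ⟨hpb, _⟩ := F0 hP key hkey1 hb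
        have : b = c := by rw [← hpb, ← hkcb, hC.1]
        exact this ▸ huc
      · obtain ⟨_, hiff⟩ := hkey2 b hb
        have hbc : H.Adj b c := by
          rw [hiff c, ← hC.1, hkcb]
        exact absurd (hcom c huc hbc) (by simp)
  · obtain ⟨⟨hk1u, hk2u⟩, hiffu⟩ := hkey2 u hu
    have hkPk : key u ≤ P.length := by omega
    have hkp : key (P.getVert (key u)) = key u := hkey1 _ hkPk
    have ha' : a = P.getVert (key u) := (hiffu a).mp hua
    have hc' : c = P.getVert (key u) := (hiffu c).mp huc
    have hkb : key b = key u := by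
      have h1' := ha' ▸ h1
      have h2' := hc' ▸ h2
      rw [hkp] at h1' h2'
      omega
    by_cases hb : b ∈ P.support
    · obtain ⟨hpb, _⟩ := F0 hP key hkey1 hb
      rw [hiffu b, ← hpb, hkb]
    · obtain ⟨_, hiffb⟩ := hkey2 b hb
      have hba : H.Adj b a := by rw [hiffb a, ha', hkb]
      exact absurd (hcom a hua hba) (by simp)

end Convex

def klex (key enc : α → ℕ) (a b : α) : Prop :=
  key a < key b ∨ (key a = key b ∧ enc a ≤ enc b)

noncomputable def tmin {x y : α} (P : H.Walk x y) (key : α → ℕ) (a : α) : ℕ :=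
  letI := Classical.dec (a ∈ P.support)
  if a ∈ P.support then (if key a = 0 then 1 else key a - 1) else key a

noncomputable def tmax {x y : α} (P : H.Walk x y) (key : α → ℕ) (a : α) : ℕ :=
  letI := Classical.dec (a ∈ P.support)
  if a ∈ P.support then (if key a = P.length then P.length - 1 else key a + 1) else key a

section MinMax
variable {x y : α} {P : H.Walk x y} {key enc : α → ℕ}

lemma tmin_mem {a : α} (ha : a ∈ P.support) :
    tmin P key a = if key a = 0 then 1 else key a - 1 := by
  simp only [tmin]; rw [if_pos ha]

lemma tmin_not {a : α} (ha : a ∉ P.support) : tmin P key a = key a := by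
  simp only [tmin]; rw [if_neg ha]

lemma tmax_mem {a : α} (ha : a ∈ P.support) :
    tmax P key a = if key a = P.length then P.length - 1 else key a + 1 := by
  simp only [tmax]; rw [if_pos ha]

lemma tmax_not {a : α} (ha : a ∉ P.support) : tmax P key a = key a := by
  simp only [tmax]; rw [if_neg ha]

variable (hT : H.IsTree) (hP : P.IsPath) (hk : 1 ≤ P.length)
  (hkey1 : ∀ j ≤ P.length, key (P.getVert j) = j)
  (hkey2 : ∀ a ∉ P.support, (1 ≤ key a ∧ key a ≤ P.length - 1) ∧
      ∀ b, H.Adj a b ↔ b = P.getVert (key a))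

include hP hk hkey1 hkey2

lemma tmin_le_k (a : α) : tmin P key a ≤ P.length := by
  by_cases ha : a ∈ P.support
  · obtain ⟨_, hka⟩ := F0 hP key hkey1 ha
    rw [tmin_mem ha]; split <;> omega
  · obtain ⟨⟨_, h2⟩, _⟩ := hkey2 a ha
    rw [tmin_not ha]; omega

lemma tmax_le_k (a : α) : tmax P key a ≤ P.length := by
  by_cases ha : a ∈ P.support
  · obtain ⟨_, hka⟩ := F0 hP key hkey1 ha
    rw [tmax_mem ha]; split <;> omega
  · obtain ⟨⟨_, h2⟩, _⟩ := hkey2 a ha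
    rw [tmax_not ha]; omega

lemma MINmem (a : α) : H.Adj a (P.getVert (tmin P key a)) := by
  by_cases ha : a ∈ P.support
  · obtain ⟨hpa, hka⟩ := F0 hP key hkey1 ha
    rw [tmin_mem ha]
    by_cases h0 : key a = 0
    · rw [if_pos h0]
      have h01 := P.adj_getVert_succ (show 0 < P.length by omega)
      rwa [show P.getVert 0 = a from by rw [← h0]; exact hpa] at h01
    · rw [if_neg h0]
      have := P.adj_getVert_succ (show key a - 1 < P.length by omega)
      rw [show key a - 1 + 1 = key a by omega, hpa] at this
      exact this.symm
  · obtain ⟨_, hiff⟩ := hkey2 a ha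
    rw [tmin_not ha]
    exact (hiff _).mpr rfl

lemma MAXmem (a : α) : H.Adj a (P.getVert (tmax P key a)) := by
  by_cases ha : a ∈ P.support
  · obtain ⟨hpa, hka⟩ := F0 hP key hkey1 ha
    rw [tmax_mem ha]
    by_cases h0 : key a = P.length
    · rw [if_pos h0]
      have h01 := P.adj_getVert_succ (show P.length - 1 < P.length by omega)
      rw [show P.length - 1 + 1 = P.length by omega] at h01
      rw [show P.getVert P.length = a from by rw [← h0]; exact hpa] at h01
      exact h01.symm
    · rw [if_neg h0]
      have := P.adj_getVert_succ (show key a < P.length by omega)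
      rwa [hpa] at this
  · obtain ⟨_, hiff⟩ := hkey2 a ha
    rw [tmax_not ha]
    exact (hiff _).mpr rfl

include hT

lemma MINle {a b : α} (hadj : H.Adj a b) :
    klex key enc (P.getVert (tmin P key a)) b := by
  by_cases ha : a ∈ P.support
  · obtain ⟨hpa, hka⟩ := F0 hP key hkey1 ha
    have hadj' : H.Adj (P.getVert (key a)) b := hpa.symm ▸ hadj
    rcases F4 hT hP key hkey1 hkey2 hka hadj' with ⟨hb, hpb, hcase⟩ | ⟨hb, hkb⟩
    · by_cases h0 : key a = 0
      · have hkb1 : key b = 1 := by omega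
        have heq : P.getVert (tmin P key a) = b := by
          rw [tmin_mem ha, if_pos h0, ← hkb1, hpb]
        exact Or.inr ⟨congrArg key heq, le_of_eq (congrArg enc heq)⟩
      · rcases hcase with hc | hc
        · left
          rw [tmin_mem ha, if_neg h0, hkey1 _ (by omega)]
          omega
        · have heq : P.getVert (tmin P key a) = b := by
            rw [tmin_mem ha, if_neg h0, show key a - 1 = key b by omega, hpb]
          exact Or.inr ⟨congrArg key heq, le_of_eq (congrArg enc heq)⟩
    · obtain ⟨⟨h1b, _⟩, _⟩ := hkey2 b hb
      left
      rw [tmin_mem ha, if_neg (by omega), hkey1 _ (by omega)]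
      omega
  · obtain ⟨_, hiff⟩ := hkey2 a ha
    have heq : P.getVert (tmin P key a) = b := by
      rw [tmin_not ha]
      exact ((hiff b).mp hadj).symm
    exact Or.inr ⟨congrArg key heq, le_of_eq (congrArg enc heq)⟩

lemma MAXle {a b : α} (hadj : H.Adj a b) :
    klex key enc b (P.getVert (tmax P key a)) := by
  by_cases ha : a ∈ P.support
  · obtain ⟨hpa, hka⟩ := F0 hP key hkey1 ha
    have hadj' : H.Adj (P.getVert (key a)) b := hpa.symm ▸ hadj
    rcases F4 hT hP key hkey1 hkey2 hka hadj' with ⟨hb, hpb, hcase⟩ | ⟨hb, hkb⟩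
    · obtain ⟨_, hkbk⟩ := F0 hP key hkey1 hb
      by_cases h0 : key a = P.length
      · have hkb1 : key b = P.length - 1 := by omega
        have heq : P.getVert (tmax P key a) = b := by
          rw [tmax_mem ha, if_pos h0, ← hkb1, hpb]
        exact Or.inr ⟨(congrArg key heq).symm, le_of_eq (congrArg enc heq).symm⟩
      · rcases hcase with hc | hc
        · have heq : P.getVert (tmax P key a) = b := by
            rw [tmax_mem ha, if_neg h0, ← hc, hpb]
          exact Or.inr ⟨(congrArg key heq).symm, le_of_eq (congrArg enc heq).symm⟩
        · left
          rw [tmax_mem ha, if_neg h0, hkey1 _ (by omega)]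
          omega
    · obtain ⟨⟨h1b, h2b⟩, _⟩ := hkey2 b hb
      by_cases h0 : key a = P.length
      · omega
      · left
        rw [tmax_mem ha, if_neg h0, hkey1 _ (by omega)]
        omega
  · obtain ⟨_, hiff⟩ := hkey2 a ha
    have heq : P.getVert (tmax P key a) = b := by
      rw [tmax_not ha]
      exact ((hiff b).mp hadj).symm
    exact Or.inr ⟨(congrArg key heq).symm, le_of_eq (congrArg enc heq).symm⟩

omit hT

lemma tmin_mono (S : Set α) (hSbip : ∀ a b, H.Adj a b → (a ∈ S ↔ b ∉ S))
    {u v : α} (hu : u ∈ S) (hv : v ∈ S) (hkl : klex key enc u v) :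
    tmin P key u ≤ tmin P key v := by
  have noSS : ¬ H.Adj u v := fun h => ((hSbip u v h).mp hu) hv
  have noSS2 : ¬ H.Adj v u := fun h => ((hSbip v u h).mp hv) hu
  by_cases hu' : u ∈ P.support <;> by_cases hv' : v ∈ P.support
  · obtain ⟨hpu, hku⟩ := F0 hP key hkey1 hu'
    obtain ⟨hpv, hkv⟩ := F0 hP key hkey1 hv'
    rcases hkl with hlt | ⟨heq, _⟩
    · by_cases h0 : key u = 0
      · rw [tmin_mem hu', if_pos h0, tmin_mem hv', if_neg (by omega)]
        by_cases h1 : key v = 1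
        · exfalso
          have := P.adj_getVert_succ (show 0 < P.length by omega)
          rw [show P.getVert 0 = u from by rw [← h0]; exact hpu,
            show P.getVert 1 = v from by rw [← h1]; exact hpv] at this
          exact noSS this
        · omega
      · rw [tmin_mem hu', if_neg h0, tmin_mem hv', if_neg (by omega)]
        omega
    · have : u = v := by rw [← hpu, ← hpv, heq]
      rw [this]
  · obtain ⟨⟨h1v, _⟩, hiffv⟩ := hkey2 v hv'
    obtain ⟨hpu, hku⟩ := F0 hP key hkey1 hu'
    rw [tmin_mem hu', tmin_not hv']
    rcases hkl with hlt | ⟨heq, _⟩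
    · split <;> omega
    · exfalso
      apply noSS2
      rw [hiffv u, ← hpu, heq]
  · obtain ⟨⟨h1u, _⟩, hiffu⟩ := hkey2 u hu'
    obtain ⟨hpv, hkv⟩ := F0 hP key hkey1 hv'
    rw [tmin_not hu', tmin_mem hv']
    rcases hkl with hlt | ⟨heq, _⟩
    · rw [if_neg (by omega)]; omega
    · exfalso
      apply noSS
      rw [hiffu v, ← hpv, heq]
  · obtain ⟨⟨h1u, _⟩, _⟩ := hkey2 u hu'
    obtain ⟨⟨h1v, _⟩, _⟩ := hkey2 v hv'
    rw [tmin_not hu', tmin_not hv']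
    rcases hkl with hlt | ⟨heq, _⟩ <;> omega

lemma tmax_mono (S : Set α) (hSbip : ∀ a b, H.Adj a b → (a ∈ S ↔ b ∉ S))
    {u v : α} (hu : u ∈ S) (hv : v ∈ S) (hkl : klex key enc u v) :
    tmax P key u ≤ tmax P key v := by
  have noSS : ¬ H.Adj u v := fun h => ((hSbip u v h).mp hu) hv
  have noSS2 : ¬ H.Adj v u := fun h => ((hSbip v u h).mp hv) hu
  by_cases hu' : u ∈ P.support <;> by_cases hv' : v ∈ P.support
  · obtain ⟨hpu, hku⟩ := F0 hP key hkey1 hu'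
    obtain ⟨hpv, hkv⟩ := F0 hP key hkey1 hv'
    rcases hkl with hlt | ⟨heq, _⟩
    · rw [tmax_mem hu', if_neg (by omega), tmax_mem hv']
      by_cases h1 : key v = P.length
      · rw [if_pos h1]
        by_cases h2 : key u = P.length - 1
        · exfalso
          have := P.adj_getVert_succ (show key u < P.length by omega)
          rw [hpu, show key u + 1 = P.length by omega,
            show P.getVert P.length = v from by rw [← h1]; exact hpv] at this
          exact noSS this
        · omega
      · rw [if_neg h1]; omega
    · have : u = v := by rw [← hpu, ← hpv, heq]
      rw [this]
  · obtain ⟨⟨h1v, h2v⟩, hiffv⟩ := hkey2 v hv'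
    obtain ⟨hpu, hku⟩ := F0 hP key hkey1 hu'
    rw [tmax_mem hu', tmax_not hv']
    rcases hkl with hlt | ⟨heq, _⟩
    · rw [if_neg (by omega)]; omega
    · exfalso
      apply noSS2
      rw [hiffv u, ← hpu, heq]
  · obtain ⟨⟨h1u, h2u⟩, hiffu⟩ := hkey2 u hu'
    obtain ⟨hpv, hkv⟩ := F0 hP key hkey1 hv'
    rw [tmax_not hu', tmax_mem hv']
    rcases hkl with hlt | ⟨heq, _⟩
    · split <;> omega
    · exfalso
      apply noSS
      rw [hiffu v, ← hpv, heq]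
  · obtain ⟨⟨h1u, h2u⟩, _⟩ := hkey2 u hu'
    obtain ⟨⟨h1v, h2v⟩, _⟩ := hkey2 v hv'
    rw [tmax_not hu', tmax_not hv']
    rcases hkl with hlt | ⟨heq, _⟩ <;> omega

end MinMax

lemma klex_key_le {key enc : α → ℕ} {a b : α} (h : klex key enc a b) : key a ≤ key b := by
  rcases h with h | ⟨h, _⟩ <;> omega

lemma LEM (hT : H.IsTree) {x y : α} {P : H.Walk x y} (hP : P.IsPath)
    (hk : 1 ≤ P.length) (key enc : α → ℕ)
    (hkey1 : ∀ j ≤ P.length, key (P.getVert j) = j)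
    (hkey2 : ∀ a ∉ P.support, (1 ≤ key a ∧ key a ≤ P.length - 1) ∧
      ∀ b, H.Adj a b ↔ b = P.getVert (key a))
    (S T : Set α)
    (hSbip : ∀ a b, H.Adj a b → (a ∈ S ↔ b ∉ S))
    (hTS : ∀ a, a ∈ T ↔ a ∉ S)
    {nS nT : ℕ} (πS : ↥S ≃ Fin nS) (πT : ↥T ≃ Fin nT)
    (hπS : ∀ u v : ↥S, πS u ≤ πS v ↔ klex key enc ↑u ↑v)
    (hπT : ∀ u v : ↥T, πT u ≤ πT v ↔ klex key enc ↑u ↑v) :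
    ∃ m M : Fin nS → Fin nT, Monotone m ∧ Monotone M ∧
      ∀ (u : ↥S) (ℓ : Fin nT),
        (∃ v : ↥T, H.Adj ↑u ↑v ∧ πT v = ℓ) ↔ m (πS u) ≤ ℓ ∧ ℓ ≤ M (πS u) := by
  have memT : ∀ (u : ↥S) (t : ℕ), H.Adj ↑u (P.getVert t) → P.getVert t ∈ T := by
    intro u t h
    rw [hTS]
    exact (hSbip _ _ h).mp u.2
  set g : ↥S → Fin nT := fun u => πT ⟨P.getVert (tmin P key ↑u),
      memT _ _ (MINmem hP hk hkey1 hkey2 ↑u)⟩ with hg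
  set G : ↥S → Fin nT := fun u => πT ⟨P.getVert (tmax P key ↑u),
      memT _ _ (MAXmem hP hk hkey1 hkey2 ↑u)⟩ with hG
  have hgt : ∀ {t₁ t₂ : ℕ}, t₁ ≤ t₂ → t₁ ≤ P.length → t₂ ≤ P.length →
      klex key enc (P.getVert t₁) (P.getVert t₂) := by
    intro t₁ t₂ hle h1 h2
    rcases Nat.eq_or_lt_of_le hle with rfl | hlt
    · exact Or.inr ⟨rfl, le_refl _⟩
    · left; rw [hkey1 _ h1, hkey1 _ h2]; exact hlt
  refine ⟨fun i => g (πS.symm i), fun i => G (πS.symm i), ?_, ?_, ?_⟩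
  · intro i j hij
    have hkl : klex key enc ↑(πS.symm i) ↑(πS.symm j) := by
      rw [← hπS]
      simpa using hij
    have hle := tmin_mono hP hk hkey1 hkey2 S hSbip (πS.symm i).2 (πS.symm j).2 hkl
    show g _ ≤ g _
    rw [hg, hπT]
    exact hgt hle (tmin_le_k hP hk hkey1 hkey2 _) (tmin_le_k hP hk hkey1 hkey2 _)
  · intro i j hij
    have hkl : klex key enc ↑(πS.symm i) ↑(πS.symm j) := by
      rw [← hπS]
      simpa using hij
    have hle := tmax_mono hP hk hkey1 hkey2 S hSbip (πS.symm i).2 (πS.symm j).2 hkl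
    show G _ ≤ G _
    rw [hG, hπT]
    exact hgt hle (tmax_le_k hP hk hkey1 hkey2 _) (tmax_le_k hP hk hkey1 hkey2 _)
  · intro u ℓ
    have hmu : g (πS.symm (πS u)) = g u := congrArg g (Equiv.symm_apply_apply πS u)
    have hMu : G (πS.symm (πS u)) = G u := congrArg G (Equiv.symm_apply_apply πS u)
    simp only []
    rw [hmu, hMu]
    constructor
    · rintro ⟨v, hadj, rfl⟩
      constructor
      · rw [hg, hπT]
        exact MINle hT hP hk hkey1 hkey2 hadj
      · rw [hG, hπT]
        exact MAXle hT hP hk hkey1 hkey2 hadj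
    · rintro ⟨h1, h2⟩
      refine ⟨πT.symm ℓ, ?_, Equiv.apply_symm_apply πT ℓ⟩
      rw [show ℓ = πT (πT.symm ℓ) from (Equiv.apply_symm_apply πT ℓ).symm] at h1 h2
      rw [hg, hπT] at h1
      rw [hG, hπT] at h2
      have hbT : ↑(πT.symm ℓ) ∉ S := (hTS _).mp (πT.symm ℓ).2
      refine CONV hT hP key hkey1 hkey2 (MINmem hP hk hkey1 hkey2 ↑u)
        (MAXmem hP hk hkey1 hkey2 ↑u) (klex_key_le h1) (klex_key_le h2)
        (fun h => hbT (h ▸ u.2)) ?_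
      intro d hud hbd
      exact hbT ((hSbip _ _ hbd).mpr ((hSbip _ _ hud).mp u.2))

end aux

open SimpleGraph Walk in
open scoped Classical in
theorem stmt3 {α : Type*} [Fintype α] (H : SimpleGraph α) (hT : H.IsTree)
    (hedge : ∃ a b : α, H.Adj a b)
    (hJ3 : ¬ ∃ s : Set α, Nonempty (H.induce s ≃g Jgraph 3))
    (U : Set α) (hbip : ∀ a b : α, H.Adj a b → (a ∈ U ↔ b ∉ U))
    (h h' : ℕ) (hh : Nat.card ↥U = h) (hh' : Nat.card ↥(Uᶜ) = h') :
    ∃ (π : ↥U ≃ Fin h) (π' : ↥(Uᶜ) ≃ Fin h')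
      (m M : Fin h → Fin h') (m' M' : Fin h' → Fin h),
      Monotone m ∧ Monotone M ∧ Monotone m' ∧ Monotone M' ∧
      (∀ (u : ↥U) (ℓ : Fin h'),
        (∃ u' : ↥(Uᶜ), H.Adj ↑u ↑u' ∧ π' u' = ℓ) ↔
          m (π u) ≤ ℓ ∧ ℓ ≤ M (π u)) ∧
      (∀ (u' : ↥(Uᶜ)) (ℓ : Fin h),
        (∃ u : ↥U, H.Adj ↑u' ↑u ∧ π u = ℓ) ↔
          m' (π' u') ≤ ℓ ∧ ℓ ≤ M' (π' u')) := by
  classical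
  obtain ⟨a0, b0, hab⟩ := hedge
  set PP : ℕ → Prop := fun n => ∃ (a b : α) (Q : H.Walk a b), Q.IsPath ∧ Q.length = n with hPP
  have hbd : ∀ n, PP n → n ≤ Fintype.card α := by
    rintro n ⟨a, b, Q, hQ, rfl⟩
    exact le_of_lt hQ.length_lt
  have h1 : PP 1 :=
    ⟨a0, b0, Walk.cons hab Walk.nil, by rw [SimpleGraph.Walk.isPath_def]; simp [hab.ne], rfl⟩
  have hcard1 : 1 ≤ Fintype.card α := hbd 1 h1
  obtain ⟨x, y, P, hP, hlen⟩ :=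
    (Nat.findGreatest_spec (m := 1) (n := Fintype.card α) hcard1 h1 : PP _)
  have hmax : ∀ {a b : α} (Q : H.Walk a b), Q.IsPath → Q.length ≤ P.length := by
    intro a b Q hQ
    rw [hlen]
    exact Nat.le_findGreatest (hbd _ ⟨a, b, Q, hQ, rfl⟩) ⟨a, b, Q, hQ, rfl⟩
  have hk : 1 ≤ P.length := by
    rw [hlen]
    exact Nat.le_findGreatest hcard1 h1
  -- key function
  have keyH : ∀ a : α, ∃ j, j ≤ P.length ∧
      (a ∈ P.support → P.getVert j = a) ∧
      (a ∉ P.support → 1 ≤ j ∧ j ≤ P.length - 1 ∧ ∀ b, H.Adj a b ↔ b = P.getVert j) := by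
    intro a
    by_cases ha : a ∈ P.support
    · obtain ⟨n, hn, hle⟩ := SimpleGraph.Walk.mem_support_iff_exists_getVert.mp ha
      exact ⟨n, hle, fun _ => hn, fun hf => absurd ha hf⟩
    · obtain ⟨j, hj1, hj2, hj3⟩ := C1 hT hP hmax hJ3 ha
      exact ⟨j, by omega, fun hf => absurd hf ha, fun _ => ⟨hj1, hj2, hj3⟩⟩
  choose key keyle keymem keynot using keyH
  have hkey1 : ∀ j ≤ P.length, key (P.getVert j) = j := by
    intro j hj
    exact getVert_inj hP _ _ (keyle _) hj (keymem _ (getVert_mem_support P hj))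
  have hkey2 : ∀ a ∉ P.support, (1 ≤ key a ∧ key a ≤ P.length - 1) ∧
      ∀ b, H.Adj a b ↔ b = P.getVert (key a) := by
    intro a ha
    obtain ⟨j1, j2, j3⟩ := keynot a ha
    exact ⟨⟨j1, j2⟩, j3⟩
  set enc : α → ℕ := fun a => ((Fintype.equivFin α) a : ℕ) with henc
  -- order construction
  have build : ∀ (W : Set α) (n : ℕ), Nat.card ↥W = n →
      ∃ π : ↥W ≃ Fin n, ∀ u v : ↥W, π u ≤ π v ↔ klex key enc ↑u ↑v := by
    intro W n hn
    have finj : Function.Injective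
        (fun u : ↥W => toLex ((key ↑u, enc ↑u) : ℕ × ℕ)) := by
      intro u v huv
      have h2 := congrArg (fun z => (ofLex z).2) huv
      simp [henc] at h2
      exact Subtype.ext ((Fintype.equivFin α).injective (Fin.val_injective h2))
    letI : LinearOrder ↥W := LinearOrder.lift'
      (fun u : ↥W => toLex ((key ↑u, enc ↑u) : ℕ × ℕ)) finj
    have hcard : Fintype.card ↥W = n := by
      rw [← Nat.card_eq_fintype_card]; exact hn
    refine ⟨(monoEquivOfFin ↥W hcard).symm.toEquiv, fun u v => ?_⟩
    rw [show ((monoEquivOfFin ↥W hcard).symm.toEquiv u ≤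
        (monoEquivOfFin ↥W hcard).symm.toEquiv v) ↔ u ≤ v from
      (monoEquivOfFin ↥W hcard).symm.le_iff_le]
    show toLex ((key ↑u, enc ↑u) : ℕ × ℕ) ≤ toLex (key ↑v, enc ↑v) ↔ _
    rw [Prod.Lex.le_iff]
    rfl
  obtain ⟨π, hπ⟩ := build U h hh
  obtain ⟨π', hπ'⟩ := build Uᶜ h' hh'
  have hbip' : ∀ a b : α, H.Adj a b → (a ∈ Uᶜ ↔ b ∉ Uᶜ) := by
    intro a b hadj
    have := hbip a b hadj
    simp only [Set.mem_compl_iff]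
    tauto
  obtain ⟨m, M, hm, hM, hiff⟩ := LEM hT hP hk key enc hkey1 hkey2 U Uᶜ hbip
    (fun a => Iff.rfl) π π' hπ hπ'
  obtain ⟨m', M', hm', hM', hiff'⟩ := LEM hT hP hk key enc hkey1 hkey2 Uᶜ U hbip'
    (fun a => by simp) π' π hπ' hπ
  exact ⟨π, π', m, M, m', M', hm, hM, hm', hM', hiff, hiff'⟩
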